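/- arXiv:1805.12477 — 6 statements merged into one kernel-verified Lean document; each statement's English description precedes it below -/
import Mathlib

section
/- Let E be a finite set and L ⊆ V_E a Lagrangian subspace. Then there exists a subset E' ⊆ E such that the twisted Lagrangian subspace L * E' is graphic. -/
open Finset
open scoped symmDiff

variable {E : Type*} [Fintype E] [DecidableEq E]

/-- The symplectic vector space `V_E = (E → 𝔽₂) × (E → 𝔽₂)`. -/
abbrev V (E : Type*) : Type _ := (E → ZMod 2) × (E → ZMod 2)

/-- Basis vector `e`. -/
def baseV (e : E) : V E := (Pi.single e 1, 0)

/-- Basis vector `e^∨`. -/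
def dualV (e : E) : V E := (0, Pi.single e 1)

/-- The symplectic form on `V E`. -/
def omegaForm (u v : V E) : ZMod 2 := ∑ e, (u.1 e * v.2 e + u.2 e * v.1 e)

/-- A subspace is Lagrangian if the form vanishes on it and its dimension is `|E|`. -/
def IsLagrangian (L : Submodule (ZMod 2) (V E)) : Prop :=
  (∀ u ∈ L, ∀ v ∈ L, omegaForm u v = 0) ∧
    Module.finrank (ZMod 2) L = Fintype.card E

/-- The span of `{e^∨ : e ∈ Y} ∪ {e : e ∈ E \ Y}`. -/
def coordSpan (Y : Finset E) : Submodule (ZMod 2) (V E) :=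
  Submodule.span (ZMod 2)
    ((fun e => dualV e) '' (Y : Set E) ∪ (fun e => baseV e) '' ((Yᶜ : Finset E) : Set E))

/-- `Y` is feasible for `L` iff `L ∩ ⟨Y^∨ ⊔ (E \ Y)⟩ = 0`. -/
def Feasible (L : Submodule (ZMod 2) (V E)) (Y : Finset E) : Prop :=
  L ⊓ coordSpan Y = ⊥

/-- The set system `ν_E(L)`. -/
def nu (L : Submodule (ZMod 2) (V E)) : Set (Finset E) := {Y | Feasible L Y}

/-- The nondegeneracy set system of a matrix `A`. -/
def Phi (A : Matrix E E (ZMod 2)) : Set (Finset E) :=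
  {U : Finset E | IsUnit (A.submatrix (fun i : ↥U => (i : E)) (fun j : ↥U => (j : E))).det}

/-- The symmetric exchange axiom. -/
def SEAxiom (Φ : Set (Finset E)) : Prop :=
  ∀ φ₁ ∈ Φ, ∀ φ₂ ∈ Φ, ∀ e ∈ φ₁ ∆ φ₂, ∃ e' ∈ φ₁ ∆ φ₂, φ₁ ∆ ({e, e'} : Finset E) ∈ Φ

/-- Binary delta-matroid: a twist of a nondegeneracy set system. -/
def IsBinaryDM (Φ : Set (Finset E)) : Prop :=
  ∃ (A : Matrix E E (ZMod 2)) (E' : Finset E), A.IsSymm ∧ Φ = (· ∆ E') '' Phi A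

/-- The involution `σ_e` swapping `e` and `e^∨`. -/
def sigmaE (e : E) : V E →ₗ[ZMod 2] V E where
  toFun u := (fun f => if f = e then u.2 f else u.1 f, fun f => if f = e then u.1 f else u.2 f)
  map_add' u v := by ext f <;> dsimp <;> split <;> rfl
  map_smul' c u := by ext f <;> dsimp <;> split <;> rfl

/-- Composition of the `σ_e` over `e ∈ E'`. -/
def sigmaSet (E' : Finset E) : V E →ₗ[ZMod 2] V E where
  toFun u := (fun f => if f ∈ E' then u.2 f else u.1 f, fun f => if f ∈ E' then u.1 f else u.2 f)
  map_add' u v := by ext f <;> dsimp <;> split <;> rfl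
  map_smul' c u := by ext f <;> dsimp <;> split <;> rfl

/-- A Lagrangian subspace is graphic if for every `e` there is `v_e ∈ L` with
`ω(v_e,e)=1` and `ω(v_e,e')=0` for `e' ≠ e`. -/
def IsGraphic (L : Submodule (ZMod 2) (V E)) : Prop :=
  ∀ e : E, ∃ v ∈ L, omegaForm v (baseV e) = 1 ∧
    ∀ e' : E, e' ≠ e → omegaForm v (baseV e') = 0

/-- The vector `e^∨ + Σ_{e'} A_{e,e'} e'`. -/
def rowVec (A : Matrix E E (ZMod 2)) (e : E) : V E := (A e, Pi.single e 1)

/-- The subspace spanned by the vectors `rowVec A e`, `e ∈ E`. -/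
def graphOf (A : Matrix E E (ZMod 2)) : Submodule (ZMod 2) (V E) :=
  Submodule.span (ZMod 2) (Set.range (rowVec A))

/-- The first Vassiliev move: `e^∨ ↦ e^∨ + e'`, `e'^∨ ↦ e'^∨ + e`, fixing other basis vectors. -/
def vassiliev1 (e e' : E) : V E →ₗ[ZMod 2] V E where
  toFun u := (fun f => u.1 f + (if f = e' then u.2 e else 0) + (if f = e then u.2 e' else 0), u.2)
  map_add' u v := by ext f <;> dsimp <;> split_ifs <;> ring
  map_smul' c u := by ext f <;> dsimp <;> split_ifs <;> ring


section Aux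

private lemma zmod2_cases (x : ZMod 2) : x = 0 ∨ x = 1 := by revert x; decide

private lemma zmod2_add_self (x : ZMod 2) : x + x = 0 := by revert x; decide

/-- The map zeroing out the coordinates at `e`. -/
def rmapE (e : E) : V E →ₗ[ZMod 2] V E where
  toFun u := (fun f => if f = e then 0 else u.1 f, fun f => if f = e then 0 else u.2 f)
  map_add' u v := by ext f <;> dsimp <;> split <;> simp
  map_smul' c u := by ext f <;> dsimp <;> split <;> simp

@[simp] lemma rmapE_apply (e : E) (v : V E) :
    rmapE e v = (fun f => if f = e then 0 else v.1 f, fun f => if f = e then 0 else v.2 f) := rfl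

@[simp] lemma sigmaSet_apply (E' : Finset E) (v : V E) :
    sigmaSet E' v = (fun f => if f ∈ E' then v.2 f else v.1 f,
      fun f => if f ∈ E' then v.1 f else v.2 f) := rfl

lemma omega_split (e : E) (v w : V E) :
    omegaForm v w = (v.1 e * w.2 e + v.2 e * w.1 e) + omegaForm (rmapE e v) (rmapE e w) := by
  have h2 : omegaForm (rmapE e v) (rmapE e w)
      = ∑ f ∈ Finset.univ.erase e, (v.1 f * w.2 f + v.2 f * w.1 f) := by
    unfold omegaForm
    rw [← Finset.sum_erase_add _ _ (Finset.mem_univ e)]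
    have hz : ((rmapE e v).1 e * (rmapE e w).2 e + (rmapE e v).2 e * (rmapE e w).1 e) = 0 := by
      simp
    rw [hz, add_zero]
    refine Finset.sum_congr rfl ?_
    intro f hf
    have hne : f ≠ e := Finset.ne_of_mem_erase hf
    simp [hne]
  unfold omegaForm
  rw [← Finset.sum_erase_add _ _ (Finset.mem_univ e)]
  rw [h2.symm] at *
  rw [h2]
  exact add_comm _ _

lemma omegaForm_zero_left (w : V E) : omegaForm 0 w = 0 := by
  simp [omegaForm]

lemma omega_baseV_right (v : V E) (e : E) : omegaForm v (baseV e) = v.2 e := by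
  simp [omegaForm, baseV, Pi.single_apply]

/-- The coordinate-condition description of `coordSpan`. -/
def coordSub (Y : Finset E) : Submodule (ZMod 2) (V E) where
  carrier := {v | (∀ f ∈ Y, v.1 f = 0) ∧ (∀ f ∉ Y, v.2 f = 0)}
  add_mem' := by
    rintro a b ⟨ha1, ha2⟩ ⟨hb1, hb2⟩
    exact ⟨fun f hf => by simp [ha1 f hf, hb1 f hf],
      fun f hf => by simp [ha2 f hf, hb2 f hf]⟩
  zero_mem' := ⟨fun f _ => rfl, fun f _ => rfl⟩
  smul_mem' := by
    rintro c a ⟨h1, h2⟩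
    exact ⟨fun f hf => by simp [h1 f hf], fun f hf => by simp [h2 f hf]⟩

lemma sum_single_eq (g : E → ZMod 2) : ∑ f, g f • Pi.single f (1 : ZMod 2) = g := by
  funext x
  rw [Finset.sum_apply]
  simp [Pi.single_apply]

lemma coordSpan_eq (Y : Finset E) : coordSpan Y = coordSub Y := by
  apply le_antisymm
  · rw [coordSpan, Submodule.span_le]
    rintro x (⟨e, he, rfl⟩ | ⟨e, he, rfl⟩)
    · refine ⟨fun f _ => rfl, fun f hf => ?_⟩
      have hne : f ≠ e := fun h => hf (h ▸ he)
      simp [dualV, Pi.single_apply, hne]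
    · have heY : e ∉ Y := by simpa using he
      refine ⟨fun f hf => ?_, fun f _ => rfl⟩
      have hne : f ≠ e := fun h => heY (h ▸ hf)
      simp [baseV, Pi.single_apply, hne]
  · intro v hv
    obtain ⟨h1, h2⟩ := hv
    have hv_eq : v = ∑ f, (v.2 f • dualV f + v.1 f • baseV f) := by
      apply Prod.ext
      · rw [Prod.fst_sum]
        have hterm : ∀ f, (v.2 f • dualV f + v.1 f • baseV f).1
            = v.1 f • Pi.single f (1 : ZMod 2) := by
          intro f; simp [dualV, baseV]
        rw [Finset.sum_congr rfl (fun f _ => hterm f), sum_single_eq]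
      · rw [Prod.snd_sum]
        have hterm : ∀ f, (v.2 f • dualV f + v.1 f • baseV f).2
            = v.2 f • Pi.single f (1 : ZMod 2) := by
          intro f; simp [dualV, baseV]
        rw [Finset.sum_congr rfl (fun f _ => hterm f), sum_single_eq]
    rw [hv_eq]
    apply Submodule.sum_mem
    intro f _
    apply Submodule.add_mem
    · by_cases hf : f ∈ Y
      · exact Submodule.smul_mem _ _ (Submodule.subset_span (Or.inl ⟨f, hf, rfl⟩))
      · rw [h2 f hf]; simp
    · by_cases hf : f ∈ Y
      · rw [h1 f hf]; simp
      · exact Submodule.smul_mem _ _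
          (Submodule.subset_span (Or.inr ⟨f, by simpa using hf, rfl⟩))

lemma mem_coordSpan {Y : Finset E} {v : V E} :
    v ∈ coordSpan Y ↔ (∀ f ∈ Y, v.1 f = 0) ∧ (∀ f ∉ Y, v.2 f = 0) := by
  rw [coordSpan_eq]; exact Iff.rfl

/-- Key lemma: any isotropic subspace supported on `T` admits a feasible set inside `T`. -/
lemma key_feasible (T : Finset E) :
    ∀ L : Submodule (ZMod 2) (V E),
      (∀ u ∈ L, ∀ v ∈ L, omegaForm u v = 0) →
      (∀ v ∈ L, ∀ f, f ∉ T → v.1 f = 0 ∧ v.2 f = 0) →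
      ∃ Y : Finset E, Y ⊆ T ∧ L ⊓ coordSpan Y = ⊥ := by
  induction T using Finset.induction_on with
  | empty =>
    intro L hiso hsupp
    refine ⟨∅, Finset.Subset.refl _, ?_⟩
    rw [Submodule.eq_bot_iff]
    rintro v ⟨hvL, -⟩
    have h := hsupp v hvL
    apply Prod.ext <;> funext f
    · exact (h f (by simp)).1
    · exact (h f (by simp)).2
  | @insert e T' he IH =>
    intro L hiso hsupp
    classical
    -- the subspace of elements with vanishing `e^∨` coordinate
    by_cases hD : ∃ b ∈ L, b.2 e = 1
    · obtain ⟨b, hb, hbe⟩ := hD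
      -- N := image under rmapE e of {v ∈ L | v.2 e = 0}
      let Ke : Submodule (ZMod 2) (V E) :=
        LinearMap.ker ((LinearMap.proj e : (E → ZMod 2) →ₗ[ZMod 2] ZMod 2).comp
          (LinearMap.snd (ZMod 2) (E → ZMod 2) (E → ZMod 2)))
      have hKe : ∀ v : V E, v ∈ Ke ↔ v.2 e = 0 := by
        intro v; simp [Ke, LinearMap.mem_ker]
      let N := (L ⊓ Ke).map (rmapE e)
      have hNiso : ∀ u ∈ N, ∀ w ∈ N, omegaForm u w = 0 := by
        rintro u ⟨x, ⟨hxL, hxK⟩, rfl⟩ w ⟨y, ⟨hyL, hyK⟩, rfl⟩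
        have hsplit := omega_split e x y
        rw [hiso x hxL y hyL, (hKe x).1 hxK, (hKe y).1 hyK] at hsplit
        simpa using hsplit.symm
      have hNsupp : ∀ v ∈ N, ∀ f, f ∉ T' → v.1 f = 0 ∧ v.2 f = 0 := by
        rintro v ⟨x, ⟨hxL, -⟩, rfl⟩ f hf
        by_cases hfe : f = e
        · simp [hfe]
        · have : f ∉ insert e T' := by simp [hfe, hf]
          have hx := hsupp x hxL f this
          simp [hfe, hx.1, hx.2]
      obtain ⟨Y', hY'T', hY'bot⟩ := IH N hNiso hNsupp
      have heY' : e ∉ Y' := fun h => he (hY'T' h)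
      refine ⟨Y', hY'T'.trans (Finset.subset_insert _ _), ?_⟩
      rw [Submodule.eq_bot_iff]
      intro v hv
      obtain ⟨hvL, hvC⟩ := Submodule.mem_inf.mp hv
      rw [mem_coordSpan] at hvC
      obtain ⟨h1, h2⟩ := hvC
      have hv2e : v.2 e = 0 := h2 e heY'
      have hrvN : rmapE e v ∈ N :=
        Submodule.mem_map_of_mem ⟨hvL, (hKe v).2 hv2e⟩
      have hrvC : rmapE e v ∈ coordSpan Y' := by
        rw [mem_coordSpan]
        constructor
        · intro f hf
          have hne : f ≠ e := fun h => heY' (h ▸ hf)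
          simp [hne, h1 f hf]
        · intro f hf
          by_cases hfe : f = e
          · simp [hfe]
          · simp [hfe, h2 f hf]
      have hrv0 : rmapE e v = 0 := by
        have := (Submodule.eq_bot_iff _).1 hY'bot _ (Submodule.mem_inf.mpr ⟨hrvN, hrvC⟩)
        exact this
      have hcoords : ∀ f, f ≠ e → v.1 f = 0 ∧ v.2 f = 0 := by
        intro f hf
        constructor
        · have := congrFun (congrArg Prod.fst hrv0) f
          simpa [hf] using this
        · have := congrFun (congrArg Prod.snd hrv0) f
          simpa [hf] using this
      -- now v is supported at the `e` first coordinate only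
      have hc : v.1 e = 0 := by
        have homega := hiso v hvL b hb
        rw [omega_split e v b, hrv0, omegaForm_zero_left, hv2e, hbe] at homega
        simpa using homega
      apply Prod.ext <;> funext f
      · by_cases hfe : f = e
        · rw [hfe]; exact hc
        · exact (hcoords f hfe).1
      · by_cases hfe : f = e
        · rw [hfe]; exact hv2e
        · exact (hcoords f hfe).2
    · -- all elements of L have vanishing `e^∨` coordinate
      push_neg at hD
      have hall : ∀ v ∈ L, v.2 e = 0 := by
        intro v hv
        rcases zmod2_cases (v.2 e) with h | h
        · exact h
        · exact absurd h (hD v hv)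
      let N := L.map (rmapE e)
      have hNiso : ∀ u ∈ N, ∀ w ∈ N, omegaForm u w = 0 := by
        rintro u ⟨x, hxL, rfl⟩ w ⟨y, hyL, rfl⟩
        have hsplit := omega_split e x y
        rw [hiso x hxL y hyL, hall x hxL, hall y hyL] at hsplit
        simpa using hsplit.symm
      have hNsupp : ∀ v ∈ N, ∀ f, f ∉ T' → v.1 f = 0 ∧ v.2 f = 0 := by
        rintro v ⟨x, hxL, rfl⟩ f hf
        by_cases hfe : f = e
        · simp [hfe]
        · have : f ∉ insert e T' := by simp [hfe, hf]
          have hx := hsupp x hxL f this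
          simp [hfe, hx.1, hx.2]
      obtain ⟨Y', hY'T', hY'bot⟩ := IH N hNiso hNsupp
      have heY' : e ∉ Y' := fun h => he (hY'T' h)
      refine ⟨insert e Y', Finset.insert_subset_insert _ hY'T', ?_⟩
      rw [Submodule.eq_bot_iff]
      intro v hv
      obtain ⟨hvL, hvC⟩ := Submodule.mem_inf.mp hv
      rw [mem_coordSpan] at hvC
      obtain ⟨h1, h2⟩ := hvC
      have hv1e : v.1 e = 0 := h1 e (Finset.mem_insert_self _ _)
      have hv2e : v.2 e = 0 := hall v hvL
      have hrvN : rmapE e v ∈ N := Submodule.mem_map_of_mem hvL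
      have hrvC : rmapE e v ∈ coordSpan Y' := by
        rw [mem_coordSpan]
        constructor
        · intro f hf
          have hne : f ≠ e := fun h => heY' (h ▸ hf)
          simp [hne, h1 f (Finset.mem_insert_of_mem hf)]
        · intro f hf
          by_cases hfe : f = e
          · simp [hfe]
          · have : f ∉ insert e Y' := by simp [hfe, hf]
            simp [hfe, h2 f this]
      have hrv0 : rmapE e v = 0 := (Submodule.eq_bot_iff _).1 hY'bot _ (Submodule.mem_inf.mpr ⟨hrvN, hrvC⟩)
      apply Prod.ext <;> funext f
      · by_cases hfe : f = e
        · rw [hfe]; exact hv1e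
        · have := congrFun (congrArg Prod.fst hrv0) f
          simpa [hfe] using this
      · by_cases hfe : f = e
        · rw [hfe]; exact hv2e
        · have := congrFun (congrArg Prod.snd hrv0) f
          simpa [hfe] using this

lemma sigmaSet_involutive (Y : Finset E) : Function.Involutive (sigmaSet Y) := by
  intro v
  apply Prod.ext <;> funext f <;> by_cases hf : f ∈ Y <;> simp [hf]

end Aux

/-- every Lagrangian subspace becomes graphic after twisting by a suitable
subset `E' ⊆ E`. -/
theorem stmt8 (L : Submodule (ZMod 2) (V E)) (hL : IsLagrangian L) :
    ∃ E' : Finset E, IsGraphic (L.map (sigmaSet E')) := by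
  classical
  obtain ⟨Y, -, hY⟩ := key_feasible Finset.univ L hL.1
    (fun v _ f hf => absurd (Finset.mem_univ f) hf)
  refine ⟨Y, ?_⟩
  set σeq : V E ≃ₗ[ZMod 2] V E :=
    LinearEquiv.ofInvolutive (sigmaSet Y) (sigmaSet_involutive Y) with hσeq
  have hcoe : (σeq : V E →ₗ[ZMod 2] V E) = sigmaSet Y := rfl
  set L' := L.map (sigmaSet Y) with hL'
  -- kernel of the second projection on L' is trivial
  have hker : ∀ v ∈ L', v.2 = 0 → v = 0 := by
    rintro v ⟨w, hw, rfl⟩ h2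
    have hwC : w ∈ coordSpan Y := by
      rw [mem_coordSpan]
      constructor
      · intro f hf
        have := congrFun h2 f
        simpa [hf] using this
      · intro f hf
        have := congrFun h2 f
        simpa [hf] using this
    have : w = 0 := (Submodule.eq_bot_iff _).1 hY _ (Submodule.mem_inf.mpr ⟨hw, hwC⟩)
    rw [this, map_zero]
  -- finrank of L'
  have hrank : Module.finrank (ZMod 2) L' = Fintype.card E := by
    have : L' = L.map (σeq : V E →ₗ[ZMod 2] V E) := by rw [hcoe]
    rw [this, LinearEquiv.finrank_map_eq]
    exact hL.2
  -- the projection to the second factor restricted to L'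
  let π : L' →ₗ[ZMod 2] (E → ZMod 2) :=
    (LinearMap.snd (ZMod 2) (E → ZMod 2) (E → ZMod 2)).comp L'.subtype
  have hπker : LinearMap.ker π = ⊥ := by
    rw [Submodule.eq_bot_iff]
    rintro ⟨v, hv⟩ hvk
    have h2 : v.2 = 0 := hvk
    exact Subtype.ext (hker v hv h2)
  have hπrange : LinearMap.range π = ⊤ := by
    apply Submodule.eq_top_of_finrank_eq
    have := LinearMap.finrank_range_add_finrank_ker π
    rw [hπker, finrank_bot, add_zero, hrank] at this
    rw [this, Module.finrank_fintype_fun_eq_card]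
  intro e
  obtain ⟨⟨v, hv⟩, hve⟩ : Pi.single e 1 ∈ LinearMap.range π := by
    rw [hπrange]; trivial
  have hv2 : v.2 = Pi.single e 1 := hve
  refine ⟨v, hv, ?_, ?_⟩
  · rw [omega_baseV_right, hv2]; simp
  · intro e' hne
    rw [omega_baseV_right, hv2]
    simp [Pi.single_apply, hne]
end

section
/- Let E be a finite set and L ⊆ V_E a graphic Lagrangian subspace with distinguished vectors v_e ∈ L (ω(v_e, e) = 1, ω(v_e, e') = 0 for e' ∈ E \ {e}). Then the E×E matrix A(L) over 𝔽₂ with entries A(L)_{e,e'} = ω(v_e, e'^∨) is symmetric: ω(v_e, e'^∨) = ω(v_{e'}, e^∨) for all e, e' ∈ E. -/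
open Finset
open scoped symmDiff

variable {E : Type*} [Fintype E] [DecidableEq E]

/-- the matrix `A(L)_{e,e'} = ω(v_e, e'^∨)` of a graphic Lagrangian
subspace is symmetric. -/
theorem stmt11 (L : Submodule (ZMod 2) (V E)) (hL : IsLagrangian L) (hG : IsGraphic L)
    (v : E → V E)
    (hv : ∀ e : E, v e ∈ L ∧ omegaForm (v e) (baseV e) = 1 ∧
      ∀ e' : E, e' ≠ e → omegaForm (v e) (baseV e') = 0) :
    ∀ e e' : E, omegaForm (v e) (dualV e') = omegaForm (v e') (dualV e) := by
  have hbase : ∀ (u : V E) (g : E), omegaForm u (baseV g) = u.2 g := by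
    intro u g
    simp [omegaForm, baseV, Pi.single_apply, mul_ite, Finset.sum_ite_eq']
  have hdual : ∀ (u : V E) (g : E), omegaForm u (dualV g) = u.1 g := by
    intro u g
    simp [omegaForm, dualV, Pi.single_apply, mul_ite, Finset.sum_ite_eq']
  have h2 : ∀ g f : E, (v g).2 f = (Pi.single g 1 : E → ZMod 2) f := by
    intro g f
    rcases eq_or_ne f g with rfl | hne
    · rw [Pi.single_eq_same, ← hbase]; exact (hv f).2.1
    · rw [Pi.single_eq_of_ne hne, ← hbase]; exact (hv g).2.2 f hne
  intro e e'
  have h0 := hL.1 _ (hv e).1 _ (hv e').1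
  rw [hdual, hdual]
  have : omegaForm (v e) (v e') = (v e).1 e' + (v e').1 e := by
    unfold omegaForm
    have : ∀ f, (v e).1 f * (v e').2 f + (v e).2 f * (v e').1 f
        = (Pi.single e' ((v e).1 e') : E → ZMod 2) f
          + (Pi.single e ((v e').1 e) : E → ZMod 2) f := by
      intro f
      rw [h2, h2, Pi.single_apply, Pi.single_apply, Pi.single_apply, Pi.single_apply]
      split_ifs with h1 h3 h3 <;> subst_vars <;> ring
    rw [Finset.sum_congr rfl fun f _ => this f, Finset.sum_add_distrib,
      Finset.sum_pi_single', Finset.sum_pi_single']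
    simp
  rw [this] at h0
  have hx : (v e).1 e' = -(v e').1 e := by linear_combination h0
  rw [hx, CharTwo.neg_eq]
end

section
/- Let E be a finite set, L ⊆ V_E a graphic Lagrangian subspace, and A(L) its associated symmetric E×E matrix over 𝔽₂ (A(L)_{e,e'} = ω(v_e, e'^∨)). Then for every Y ⊆ E: L ∩ span({e^∨ : e ∈ Y} ∪ {e : e ∈ E \ Y}) = {0} if and only if the submatrix A(L)|_Y is invertible over 𝔽₂. Equivalently, ν_E(L) equals the nondegeneracy set system (E; Φ(A(L))). -/
open Finset
open scoped symmDiff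

variable {E : Type*} [Fintype E] [DecidableEq E]

lemma omega_baseV (u : V E) (e : E) : omegaForm u (baseV e) = u.2 e := by
  simp [omegaForm, baseV, Pi.single_apply, mul_ite, Finset.sum_ite_eq']

lemma omega_dualV (u : V E) (e : E) : omegaForm u (dualV e) = u.1 e := by
  simp [omegaForm, dualV, Pi.single_apply, mul_ite, Finset.sum_ite_eq']

lemma mem_coordSpan_iff (Y : Finset E) (u : V E) :
    u ∈ coordSpan Y ↔ (∀ f ∈ Y, u.1 f = 0) ∧ (∀ f ∉ Y, u.2 f = 0) := by
  constructor
  · intro hu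
    induction hu using Submodule.span_induction with
    | mem x hx =>
      rcases hx with ⟨e, he, rfl⟩ | ⟨e, he, rfl⟩
      · refine ⟨fun f _ => rfl, fun f hf => ?_⟩
        have : f ≠ e := by rintro rfl; exact hf (by simpa using he)
        simp [dualV, Pi.single_eq_of_ne this]
      · have he' : e ∉ Y := by simpa using he
        refine ⟨fun f hf => ?_, fun f _ => rfl⟩
        have : f ≠ e := by rintro rfl; exact he' hf
        simp [baseV, Pi.single_eq_of_ne this]
    | zero => exact ⟨fun _ _ => rfl, fun _ _ => rfl⟩
    | add x y _ _ hx hy =>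
      exact ⟨fun f hf => by simp [hx.1 f hf, hy.1 f hf],
        fun f hf => by simp [hx.2 f hf, hy.2 f hf]⟩
    | smul c x _ hx =>
      exact ⟨fun f hf => by simp [hx.1 f hf], fun f hf => by simp [hx.2 f hf]⟩
  · rintro ⟨h1, h2⟩
    have hu : u = ∑ e ∈ (Yᶜ : Finset E), u.1 e • baseV e + ∑ e ∈ Y, u.2 e • dualV e := by
      refine Prod.ext ?_ ?_ <;> funext f <;>
        simp only [Prod.fst_add, Prod.snd_add, Prod.fst_sum, Prod.snd_sum, baseV, dualV,
          Prod.smul_mk, Pi.add_apply, Finset.sum_apply, Pi.smul_apply, smul_eq_mul,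
          Pi.single_apply, mul_ite, mul_one, mul_zero, Pi.zero_apply, Finset.sum_ite_eq',
          Finset.sum_const_zero, add_zero, zero_add, Finset.mem_compl]
      · by_cases hf : f ∈ Y
        · simp [hf, h1 f hf]
        · simp [hf]
      · by_cases hf : f ∈ Y
        · simp [hf]
        · simp [hf, h2 f hf]
    rw [hu]
    refine add_mem (Submodule.sum_mem _ fun e he => Submodule.smul_mem _ _ ?_)
      (Submodule.sum_mem _ fun e he => Submodule.smul_mem _ _ ?_)
    · exact Submodule.subset_span (Or.inr ⟨e, by simpa using he, rfl⟩)
    · exact Submodule.subset_span (Or.inl ⟨e, by simpa using he, rfl⟩)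

/-- for a graphic Lagrangian subspace `L` with associated matrix `A(L)`,
a subset `Y` is feasible iff the submatrix `A(L)|_Y` is invertible; equivalently,
`ν_E(L) = Φ(A(L))`. -/

theorem stmt13 (L : Submodule (ZMod 2) (V E)) (hL : IsLagrangian L) (hG : IsGraphic L)
    (v : E → V E)
    (hv : ∀ e : E, v e ∈ L ∧ omegaForm (v e) (baseV e) = 1 ∧
      ∀ e' : E, e' ≠ e → omegaForm (v e) (baseV e') = 0) :
    (∀ Y : Finset E, Feasible L Y ↔
        Y ∈ Phi (Matrix.of fun e e' => omegaForm (v e) (dualV e'))) ∧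
    nu L = Phi (Matrix.of fun e e' => omegaForm (v e) (dualV e')) :=  by
  classical
  set A : Matrix E E (ZMod 2) := Matrix.of fun e e' => omegaForm (v e) (dualV e') with hAdef
  -- components of v
  have hv2 : ∀ e, (v e).2 = Pi.single e 1 := by
    intro e; funext f
    by_cases hf : f = e
    · subst hf; have := (hv f).2.1; rw [omega_baseV] at this; simp [this]
    · have := (hv e).2.2 f hf; rw [omega_baseV] at this
      simp [this, Pi.single_eq_of_ne hf]
  have hv1 : ∀ e, (v e).1 = A e := by
    intro e; funext f
    have : A e f = (v e).1 f := omega_dualV (v e) f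
    exact this.symm
  -- second coordinate of a combination
  have hsum2 : ∀ c : E → ZMod 2, (∑ e, c e • v e).2 = c := by
    intro c; funext f
    simp [Prod.snd_sum, Finset.sum_apply, hv2, Pi.single_apply, mul_ite,
      Finset.sum_ite_eq']
  have hsum1 : ∀ (c : E → ZMod 2) (f : E), (∑ e, c e • v e).1 f = ∑ e, c e * A e f := by
    intro c f
    simp [Prod.fst_sum, Finset.sum_apply, hv1]
  -- linear independence and L = span of v
  have hli : LinearIndependent (ZMod 2) v := by
    rw [Fintype.linearIndependent_iff]
    intro c hc i
    have := congrFun (congrArg Prod.snd hc) i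
    rw [hsum2 c] at this
    simpa using this
  have hLspan : Submodule.span (ZMod 2) (Set.range v) = L := by
    refine Submodule.eq_of_le_of_finrank_le
      (Submodule.span_le.2 (Set.range_subset_iff.2 fun e => (hv e).1)) ?_
    rw [hL.2, finrank_span_eq_card hli]
  have main : ∀ Y : Finset E, Feasible L Y ↔ Y ∈ Phi A := by
    intro Y
    set M : Matrix ↥Y ↥Y (ZMod 2) :=
      A.submatrix (fun i : ↥Y => (i : E)) (fun j : ↥Y => (j : E)) with hM
    constructor
    · intro hF
      by_contra hdet
      have hdet0 : M.det = 0 := by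
        have hdet' : ¬ IsUnit M.det := hdet
        rwa [isUnit_iff_ne_zero, not_not] at hdet'
      obtain ⟨w, hw0, hw⟩ := Matrix.exists_vecMul_eq_zero_iff.2 hdet0
      set c : E → ZMod 2 := fun e => if h : e ∈ Y then w ⟨e, h⟩ else 0 with hc
      set x : V E := ∑ e, c e • v e with hx
      have hxL : x ∈ L := by
        rw [← hLspan]
        exact Submodule.sum_mem _ fun e _ =>
          Submodule.smul_mem _ _ (Submodule.subset_span ⟨e, rfl⟩)
      have hxC : x ∈ coordSpan Y := by
        rw [mem_coordSpan_iff]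
        constructor
        · intro f hf
          have h2 : x.1 f = ∑ e ∈ Y, c e * A e f := by
            rw [hx, hsum1]
            refine (Finset.sum_subset (Finset.subset_univ Y) ?_).symm
            intro e _ he; simp [hc, he]
          rw [h2]
          have h3 := congrFun hw ⟨f, hf⟩
          simp only [Matrix.vecMul, dotProduct, Pi.zero_apply] at h3
          rw [← h3, ← Finset.sum_coe_sort Y (fun e => c e * A e f)]
          refine Finset.sum_congr rfl fun i _ => ?_
          simp [hc, i.2, hM]
        · intro f hf
          have h2 := congrFun (hsum2 c) f
          rw [hx]
          rw [h2]
          simp [hc, hf]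
      have hx0 : x = 0 := by
        have hm : x ∈ L ⊓ coordSpan Y := ⟨hxL, hxC⟩
        rw [Feasible] at hF
        rw [hF] at hm
        simpa using hm
      apply hw0
      funext i
      have hci : c (i : E) = 0 := by
        have h4 := congrFun (congrArg Prod.snd hx0) (i : E)
        rw [hsum2 c] at h4
        simpa using h4
      simpa [hc, i.2] using hci
    · intro hU
      have hdet : M.det ≠ 0 := by
        have hU' : IsUnit M.det := hU
        exact isUnit_iff_ne_zero.1 hU'
      rw [Feasible, eq_bot_iff]
      intro x hxm
      obtain ⟨hxL, hxC⟩ := Submodule.mem_inf.1 hxm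
      rw [← hLspan] at hxL
      obtain ⟨c, rfl⟩ := Submodule.mem_span_range_iff_exists_fun _ |>.1 hxL
      rw [mem_coordSpan_iff] at hxC
      have hcsupp : ∀ e ∉ Y, c e = 0 := by
        intro e he
        have h2 := hxC.2 e he
        rwa [congrFun (hsum2 c) e] at h2
      have hw : Matrix.vecMul (fun i : ↥Y => c (i : E)) M = 0 := by
        funext j
        show (Matrix.vecMul (fun i : ↥Y => c (i : E)) M) j = (0 : ZMod 2)
        have h1 : (Matrix.vecMul (fun i : ↥Y => c (i : E)) M) j = ∑ e ∈ Y, c e * A e (j : E) := by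
          simp only [Matrix.vecMul, dotProduct]
          rw [← Finset.sum_coe_sort Y (fun e => c e * A e (j : E))]
          exact Finset.sum_congr rfl fun i _ => rfl
        rw [h1, Finset.sum_subset (Finset.subset_univ Y)
          (fun e _ he => by simp [hcsupp e he])]
        rw [← hsum1 c (j : E)]
        exact hxC.1 _ j.2
      have hw0 : (fun i : ↥Y => c (i : E)) = (0 : ↥Y → ZMod 2) := by
        by_contra hne
        exact hdet (Matrix.exists_vecMul_eq_zero_iff.1 ⟨_, hne, hw⟩)
      have hc0 : c = 0 := by
        funext e
        by_cases he : e ∈ Y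
        · exact congrFun hw0 ⟨e, he⟩
        · exact hcsupp e he
      simp [hc0]
  refine ⟨main, Set.ext fun Y => ?_⟩
  exact main Y
end

section
/- Let E be a finite set and e, e' ∈ E two distinct elements. The first Vassiliev move, i.e. the linear map T: V_E → V_E fixing all basis vectors except e^∨ ↦ e^∨ + e' and e'^∨ ↦ e'^∨ + e, preserves the symplectic form ω (ω(T(u), T(v)) = ω(u, v) for all u, v ∈ V_E); consequently T maps every Lagrangian subspace of V_E to a Lagrangian subspace. -/
open Finset
open scoped symmDiff

variable {E : Type*} [Fintype E] [DecidableEq E]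

lemma vass_invol (e e' : E) (u : V E) :
    vassiliev1 e e' (vassiliev1 e e' u) = u := by
  ext f
  · simp only [vassiliev1, LinearMap.coe_mk, AddHom.coe_mk]
    split_ifs <;> ring_nf <;>
      simp [show (2 : ZMod 2) = 0 from rfl]
  · rfl

lemma vass_form (e e' : E) (u v : V E) :
    omegaForm (vassiliev1 e e' u) (vassiliev1 e e' v) = omegaForm u v := by
  simp only [omegaForm, vassiliev1, LinearMap.coe_mk, AddHom.coe_mk]
  have key : ∀ f : E,
      (u.1 f + (if f = e' then u.2 e else 0) + (if f = e then u.2 e' else 0)) * v.2 f +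
        u.2 f * (v.1 f + (if f = e' then v.2 e else 0) + (if f = e then v.2 e' else 0)) =
      (u.1 f * v.2 f + u.2 f * v.1 f) +
        ((if f = e' then u.2 e * v.2 f + u.2 f * v.2 e else 0) +
          (if f = e then u.2 e' * v.2 f + u.2 f * v.2 e' else 0)) := by
    intro f; split_ifs <;> ring
  rw [Finset.sum_congr rfl fun f _ => key f]
  simp only [Finset.sum_add_distrib, Finset.sum_ite_eq' Finset.univ, Finset.mem_univ, if_true]
  have h2 : ∀ a b : ZMod 2, a + b + (b + a) = 0 := by decide
  rw [h2, add_zero]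

/-- the first Vassiliev move preserves the symplectic form; consequently it
maps Lagrangian subspaces to Lagrangian subspaces. -/
theorem stmt15 (e e' : E) (hne : e ≠ e') :
    (∀ u v : V E, omegaForm (vassiliev1 e e' u) (vassiliev1 e e' v) = omegaForm u v) ∧
    ∀ L : Submodule (ZMod 2) (V E), IsLagrangian L →
      IsLagrangian (L.map (vassiliev1 e e')) := by
  refine ⟨vass_form e e', fun L hL => ⟨?_, ?_⟩⟩
  · rintro _ ⟨u, hu, rfl⟩ _ ⟨v, hv, rfl⟩
    rw [vass_form]
    exact hL.1 u hu v hv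
  · rw [show L.map (vassiliev1 e e') =
        L.map ((LinearEquiv.ofInvolutive (vassiliev1 e e') (vass_invol e e') :
          V E ≃ₗ[ZMod 2] V E) : V E →ₗ[ZMod 2] V E) from rfl,
      LinearEquiv.finrank_map_eq]
    exact hL.2
end

section
/- Let E be a finite set and e, e' ∈ E two distinct elements. The second Vassiliev move, i.e. the linear map S = σ_{e'} ∘ T ∘ σ_{e'}: V_E → V_E, where T is the first Vassiliev move for the pair (e, e') and σ_{e'} is the involution swapping e' and e'^∨ and fixing the other basis vectors, preserves the symplectic form ω; consequently S maps every Lagrangian subspace of V_E to a Lagrangian subspace. -/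
open Finset
open scoped symmDiff

variable {E : Type*} [Fintype E] [DecidableEq E]

lemma vass2_apply (e e' : E) (hne : e ≠ e') (u : V E) :
    ((sigmaE e').comp ((vassiliev1 e e').comp (sigmaE e'))) u =
      (fun f => u.1 f + (if f = e then u.1 e' else 0),
       fun f => u.2 f + (if f = e' then u.2 e else 0)) := by
  ext f <;> simp only [LinearMap.comp_apply, sigmaE, vassiliev1, LinearMap.coe_mk,
    AddHom.coe_mk] <;> split_ifs with h1 h2 <;>
    simp_all <;> ring

/-- the second Vassiliev move `σ_{e'} ∘ T ∘ σ_{e'}` preserves the symplectic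
form; consequently it maps Lagrangian subspaces to Lagrangian subspaces. -/
theorem stmt16 (e e' : E) (hne : e ≠ e') :
    (∀ u v : V E,
        omegaForm ((sigmaE e').comp ((vassiliev1 e e').comp (sigmaE e')) u)
          ((sigmaE e').comp ((vassiliev1 e e').comp (sigmaE e')) v) = omegaForm u v) ∧
    ∀ L : Submodule (ZMod 2) (V E), IsLagrangian L →
      IsLagrangian (L.map ((sigmaE e').comp ((vassiliev1 e e').comp (sigmaE e')))) := by
  set S := (sigmaE e').comp ((vassiliev1 e e').comp (sigmaE e')) with hS
  have hform : ∀ u v : V E, omegaForm (S u) (S v) = omegaForm u v := by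
    intro u v
    rw [vass2_apply e e' hne, vass2_apply e e' hne]
    unfold omegaForm
    dsimp only
    have key : ∀ f : E,
        (u.1 f + (if f = e then u.1 e' else 0)) * (v.2 f + (if f = e' then v.2 e else 0)) +
          (u.2 f + (if f = e' then u.2 e else 0)) * (v.1 f + (if f = e then v.1 e' else 0)) =
        (u.1 f * v.2 f + u.2 f * v.1 f) +
          ((if f = e then u.1 e' * v.2 e + u.2 e * v.1 e' else 0) +
           (if f = e' then u.1 e' * v.2 e + u.2 e * v.1 e' else 0)) := by
      intro f
      split_ifs with h1 h2 <;> subst_vars <;> first | (exact absurd rfl hne) | ring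
    rw [Finset.sum_congr rfl (fun f _ => key f)]
    simp [Finset.sum_add_distrib, Finset.sum_ite_eq', CharTwo.add_self_eq_zero]
  have hSS : S.comp S = LinearMap.id := by
    apply LinearMap.ext
    intro u
    rw [LinearMap.comp_apply, hS, vass2_apply e e' hne, vass2_apply e e' hne]
    ext f <;> dsimp <;> split_ifs with h <;>
      simp_all [hne, Ne.symm hne, two_smul, add_assoc, CharTwo.add_self_eq_zero]
  refine ⟨hform, fun L hL => ?_⟩
  obtain ⟨hiso, hrank⟩ := hL
  constructor
  · rintro u ⟨x, hx, rfl⟩ v ⟨y, hy, rfl⟩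
    rw [hform]; exact hiso x hx y hy
  · let eS : V E ≃ₗ[ZMod 2] V E := LinearEquiv.ofLinear S S hSS hSS
    have : L.map S = L.map (eS : V E →ₗ[ZMod 2] V E) := rfl
    rw [this, LinearEquiv.finrank_map_eq eS L]
    exact hrank
end

section
/- Let E₁ and E₂ be disjoint finite sets, and let L₁ ⊆ V_{E₁} and L₂ ⊆ V_{E₂} be Lagrangian subspaces. Then, under the canonical identification V_{E₁ ⊔ E₂} ≅ V_{E₁} × V_{E₂} (an isomorphism of symplectic spaces, the form being the sum of the two forms), the direct sum L₁ × L₂ is a Lagrangian subspace of V_{E₁ ⊔ E₂}, and ν_{E₁ ⊔ E₂}(L₁ × L₂) is the direct sum of the set systems ν_{E₁}(L₁) and ν_{E₂}(L₂): a subset Y ⊆ E₁ ⊔ E₂ is feasible for ν_{E₁ ⊔ E₂}(L₁ × L₂) if and only if Y ∩ E₁ is feasible for ν_{E₁}(L₁) and Y ∩ E₂ is feasible for ν_{E₂}(L₂). -/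
open Finset
open scoped symmDiff

variable {E : Type*} [Fintype E] [DecidableEq E]

/-- The canonical identification `V E₁ × V E₂ ≃ V (E₁ ⊕ E₂)` (as a linear map). -/
def iotaSum {E₁ E₂ : Type*} : (V E₁ × V E₂) →ₗ[ZMod 2] V (E₁ ⊕ E₂) where
  toFun p := (Sum.elim p.1.1 p.2.1, Sum.elim p.1.2 p.2.2)
  map_add' u v := by apply Prod.ext <;> funext f <;> cases f <;> rfl
  map_smul' c u := by apply Prod.ext <;> funext f <;> cases f <;> rfl

section Aux

variable {E₁ E₂ : Type*} [Fintype E₁] [DecidableEq E₁] [Fintype E₂] [DecidableEq E₂]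

lemma iotaSum_injective :
    Function.Injective (iotaSum : V E₁ × V E₂ →ₗ[ZMod 2] V (E₁ ⊕ E₂)) := by
  intro u v h
  have h1 := congrArg Prod.fst h
  have h2 := congrArg Prod.snd h
  refine Prod.ext (Prod.ext ?_ ?_) (Prod.ext ?_ ?_) <;> funext e
  · exact congrFun h1 (Sum.inl e)
  · exact congrFun h2 (Sum.inl e)
  · exact congrFun h1 (Sum.inr e)
  · exact congrFun h2 (Sum.inr e)

lemma iota_base_inl (e : E₁) :
    (iotaSum ((baseV e, (0 : V E₂)) : V E₁ × V E₂) : V (E₁ ⊕ E₂)) = baseV (Sum.inl e) := by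
  refine Prod.ext ?_ ?_ <;> funext f <;> cases f <;>
    simp [iotaSum, baseV, Pi.single_apply]

lemma iota_base_inr (e : E₂) :
    (iotaSum (((0 : V E₁), baseV e) : V E₁ × V E₂) : V (E₁ ⊕ E₂)) = baseV (Sum.inr e) := by
  refine Prod.ext ?_ ?_ <;> funext f <;> cases f <;>
    simp [iotaSum, baseV, Pi.single_apply]

lemma iota_dual_inl (e : E₁) :
    (iotaSum ((dualV e, (0 : V E₂)) : V E₁ × V E₂) : V (E₁ ⊕ E₂)) = dualV (Sum.inl e) := by
  refine Prod.ext ?_ ?_ <;> funext f <;> cases f <;>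
    simp [iotaSum, dualV, Pi.single_apply]

lemma iota_dual_inr (e : E₂) :
    (iotaSum (((0 : V E₁), dualV e) : V E₁ × V E₂) : V (E₁ ⊕ E₂)) = dualV (Sum.inr e) := by
  refine Prod.ext ?_ ?_ <;> funext f <;> cases f <;>
    simp [iotaSum, dualV, Pi.single_apply]

lemma coordSpan_sum (Y : Finset (E₁ ⊕ E₂)) :
    ((coordSpan Y.toLeft).prod (coordSpan Y.toRight)).map iotaSum = coordSpan Y := by
  rw [coordSpan, coordSpan, coordSpan, ← LinearMap.span_inl_union_inr, Submodule.map_span]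
  apply le_antisymm
  · rw [Submodule.span_le]
    rintro v ⟨w, hw, rfl⟩
    rcases hw with ⟨s, hs, rfl⟩ | ⟨s, hs, rfl⟩
    · rcases hs with ⟨e, he, rfl⟩ | ⟨e, he, rfl⟩
      · rw [LinearMap.inl_apply, iota_dual_inl]
        exact Submodule.subset_span (Or.inl ⟨Sum.inl e, Finset.mem_toLeft.mp he, rfl⟩)
      · rw [LinearMap.inl_apply, iota_base_inl]
        refine Submodule.subset_span (Or.inr ⟨Sum.inl e, ?_, rfl⟩)
        simp only [Finset.coe_compl, Set.mem_compl_iff, Finset.mem_coe] at he ⊢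
        simpa [Finset.mem_toLeft] using he
    · rcases hs with ⟨e, he, rfl⟩ | ⟨e, he, rfl⟩
      · rw [LinearMap.inr_apply, iota_dual_inr]
        exact Submodule.subset_span (Or.inl ⟨Sum.inr e, Finset.mem_toRight.mp he, rfl⟩)
      · rw [LinearMap.inr_apply, iota_base_inr]
        refine Submodule.subset_span (Or.inr ⟨Sum.inr e, ?_, rfl⟩)
        simp only [Finset.coe_compl, Set.mem_compl_iff, Finset.mem_coe] at he ⊢
        simpa [Finset.mem_toRight] using he
  · rw [Submodule.span_le]
    rintro v (⟨y, hy, rfl⟩ | ⟨y, hy, rfl⟩)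
    · cases y with
      | inl e =>
        refine Submodule.subset_span ⟨LinearMap.inl (ZMod 2) (V E₁) (V E₂) (dualV e), ?_, iota_dual_inl e⟩
        exact Or.inl ⟨dualV e, Or.inl ⟨e, Finset.mem_toLeft.mpr hy, rfl⟩, rfl⟩
      | inr e =>
        refine Submodule.subset_span ⟨LinearMap.inr (ZMod 2) (V E₁) (V E₂) (dualV e), ?_, iota_dual_inr e⟩
        exact Or.inr ⟨dualV e, Or.inl ⟨e, Finset.mem_toRight.mpr hy, rfl⟩, rfl⟩
    · cases y with
      | inl e =>
        refine Submodule.subset_span ⟨LinearMap.inl (ZMod 2) (V E₁) (V E₂) (baseV e), ?_, iota_base_inl e⟩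
        refine Or.inl ⟨baseV e, Or.inr ⟨e, ?_, rfl⟩, rfl⟩
        simp only [Finset.coe_compl, Set.mem_compl_iff, Finset.mem_coe] at hy ⊢
        simpa [Finset.mem_toLeft] using hy
      | inr e =>
        refine Submodule.subset_span ⟨LinearMap.inr (ZMod 2) (V E₁) (V E₂) (baseV e), ?_, iota_base_inr e⟩
        refine Or.inr ⟨baseV e, Or.inr ⟨e, ?_, rfl⟩, rfl⟩
        simp only [Finset.coe_compl, Set.mem_compl_iff, Finset.mem_coe] at hy ⊢
        simpa [Finset.mem_toRight] using hy

/-- A submodule product is linearly equivalent to the product of the submodules. -/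
def prodSubEquiv {R M N : Type*} [CommRing R] [AddCommGroup M] [AddCommGroup N]
    [Module R M] [Module R N] (p : Submodule R M) (q : Submodule R N) :
    ↥(p.prod q) ≃ₗ[R] ↥p × ↥q where
  toFun x := (⟨x.1.1, x.2.1⟩, ⟨x.1.2, x.2.2⟩)
  invFun y := ⟨(y.1.1, y.2.1), ⟨y.1.2, y.2.2⟩⟩
  map_add' _ _ := rfl
  map_smul' _ _ := rfl
  left_inv _ := rfl
  right_inv _ := rfl

lemma omega_iota (u v : V E₁ × V E₂) :
    omegaForm (iotaSum u) (iotaSum v) = omegaForm u.1 v.1 + omegaForm u.2 v.2 := by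
  simp only [omegaForm, iotaSum, LinearMap.coe_mk, AddHom.coe_mk, Fintype.sum_sum_type,
    Sum.elim_inl, Sum.elim_inr]

end Aux

/-- under the canonical identification `V_{E₁ ⊔ E₂} ≅ V_{E₁} × V_{E₂}`
(which matches the symplectic forms), the direct sum `L₁ × L₂` of Lagrangian subspaces is
Lagrangian, and `ν_{E₁ ⊔ E₂}(L₁ × L₂)` is the direct sum of the set systems `ν_{E₁}(L₁)`
and `ν_{E₂}(L₂)`: `Y` is feasible iff `Y ∩ E₁` and `Y ∩ E₂` are feasible. -/
theorem stmt17 {E₁ E₂ : Type*} [Fintype E₁] [DecidableEq E₁] [Fintype E₂] [DecidableEq E₂]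
    (L₁ : Submodule (ZMod 2) (V E₁)) (L₂ : Submodule (ZMod 2) (V E₂))
    (h₁ : IsLagrangian L₁) (h₂ : IsLagrangian L₂) :
    (∀ u v : V E₁ × V E₂,
        omegaForm (iotaSum u) (iotaSum v) = omegaForm u.1 v.1 + omegaForm u.2 v.2) ∧
    IsLagrangian ((L₁.prod L₂).map iotaSum) ∧
    ∀ Y : Finset (E₁ ⊕ E₂),
      Feasible ((L₁.prod L₂).map iotaSum) Y ↔
        (Feasible L₁ Y.toLeft ∧ Feasible L₂ Y.toRight) := by
  have hinj : Function.Injective (iotaSum : V E₁ × V E₂ →ₗ[ZMod 2] V (E₁ ⊕ E₂)) :=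
    iotaSum_injective
  refine ⟨omega_iota, ⟨?_, ?_⟩, ?_⟩
  · rintro u ⟨a, ⟨ha1, ha2⟩, rfl⟩ v ⟨b, ⟨hb1, hb2⟩, rfl⟩
    rw [omega_iota, h₁.1 _ ha1 _ hb1, h₂.1 _ ha2 _ hb2, add_zero]
  · rw [LinearEquiv.finrank_eq (Submodule.equivMapOfInjective _ hinj _).symm,
      LinearEquiv.finrank_eq (prodSubEquiv L₁ L₂), Module.finrank_prod,
      h₁.2, h₂.2, Fintype.card_sum]
  · intro Y
    rw [Feasible, Feasible, Feasible, ← coordSpan_sum,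
      ← Submodule.map_inf _ hinj,
      (Submodule.map_injective_of_injective hinj).eq_iff' (Submodule.map_bot _),
      Submodule.prod_inf_prod,
      Submodule.prod_eq_bot_iff]
end
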